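/- Let T₁, T₂, T₃, T₄ be mutually commuting normal bounded operators on a Hilbert space H and T = [[T₁, T₂],[T₃, T₄]] on H ⊕ H. Set t₁ = T₁*T₁ + T₃*T₃, t₂ = T₁*T₂ + T₃*T₄, t₃ = T₂*T₂ + T₄*T₄, s₁ = T₁T₁* + T₂T₂*, s₂ = T₁T₃* + T₂T₄*, s₃ = T₃T₃* + T₄T₄*. Then T is binormal if and only if (s₂t₂*)* = s₂t₂*, (s₂*t₂)* = s₂*t₂, and t₁s₂ + t₂s₃ = s₁t₂ + s₂t₃. -/

import Mathlib

open ContinuousLinearMap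

/-- A bounded operator `T` is binormal if `T*T` commutes with `TT*`. -/
def Binormal {E : Type*} [NormedAddCommGroup E] [InnerProductSpace ℂ E] [CompleteSpace E]
    (T : E →L[ℂ] E) : Prop :=
  (adjoint T * T) * (T * adjoint T) = (T * adjoint T) * (adjoint T * T)

section Fuglede

open NormedSpace

variable {E : Type*} [NormedAddCommGroup E] [InnerProductSpace ℂ E] [CompleteSpace E]

noncomputable local instance : NormedAlgebra ℚ (E →L[ℂ] E) :=
  NormedAlgebra.restrictScalars ℚ ℂ (E →L[ℂ] E)

lemma norm_exp_skew_le_one (B : E →L[ℂ] E) (hB : star B = -B) :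
    ‖exp B‖ ≤ 1 := by
  have h1 : star (exp B) * exp B = 1 := by
    rw [star_exp, hB, ← exp_add_of_commute ((Commute.refl B).neg_left), neg_add_cancel, exp_zero]
  have h2 : ‖exp B‖ * ‖exp B‖ = ‖(1 : E →L[ℂ] E)‖ := by
    rw [← CStarRing.norm_star_mul_self, h1]
  have h3 : ‖(1 : E →L[ℂ] E)‖ ≤ 1 := by
    rw [ContinuousLinearMap.one_def]; exact ContinuousLinearMap.norm_id_le
  nlinarith [norm_nonneg (exp B)]

lemma fuglede (N S : E →L[ℂ] E) (hN : star N * N = N * star N)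
    (hNS : N * S = S * N) : star N * S = S * star N := by
  set A := star N with hA
  have hNA : Commute N A := hN.symm
  have hSN : Commute S N := hNS.symm
  have key : ∀ w : ℂ, exp (w • A) * S = S * exp (w • A) := by
    have hbound : ∀ w : ℂ, ‖exp (w • A) * S * exp (-(w • A))‖ ≤ ‖S‖ := by
      intro w
      set z := (starRingEnd ℂ) w with hz
      set B := w • A - z • N with hB
      have hcomm1 : Commute B (z • N) :=
        (((hNA.symm).smul_left w).smul_right z).sub_left (Commute.refl _)
      have e1 : exp (w • A) = exp B * exp (z • N) := by
        rw [← exp_add_of_commute hcomm1]; congr 1; rw [hB]; abel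
      have e2 : exp (-(w • A)) = exp (-(z • N)) * exp (-B) := by
        rw [← exp_add_of_commute hcomm1.symm.neg_left.neg_right]; congr 1; rw [hB]; abel
      have e3 : exp (z • N) * S * exp (-(z • N)) = S := by
        have : Commute S (exp (z • N)) := (hSN.smul_right z).exp_right
        rw [← this.eq, mul_assoc, ← exp_add_of_commute ((Commute.refl (z • N)).neg_right),
          add_neg_cancel, exp_zero, mul_one]
      have hBs : star B = -B := by
        rw [hB]
        simp only [star_sub, star_smul, hA, star_star, RCLike.star_def, neg_sub]
        rw [← hz, starRingEnd_self_apply]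
      have hBs' : star (-B) = -(-B) := by rw [star_neg, hBs, neg_neg]
      have heq : exp (w • A) * S * exp (-(w • A)) = exp B * S * exp (-B) := by
        rw [e1, e2]
        calc exp B * exp (z • N) * S * (exp (-(z • N)) * exp (-B))
            = exp B * (exp (z • N) * S * exp (-(z • N))) * exp (-B) := by
              simp only [mul_assoc]
          _ = exp B * S * exp (-B) := by rw [e3]
      rw [heq]
      have n1 : ‖exp B‖ ≤ 1 := norm_exp_skew_le_one B hBs
      have n2 : ‖exp (-B)‖ ≤ 1 := norm_exp_skew_le_one (-B) hBs'
      calc ‖exp B * S * exp (-B)‖ ≤ ‖exp B * S‖ * ‖exp (-B)‖ := norm_mul_le _ _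
        _ ≤ ‖exp B‖ * ‖S‖ * ‖exp (-B)‖ := by
            exact mul_le_mul_of_nonneg_right (norm_mul_le _ _) (norm_nonneg _)
        _ ≤ ‖S‖ := by
            have ha : ‖exp B‖ * ‖S‖ ≤ ‖S‖ := mul_le_of_le_one_left (norm_nonneg S) n1
            have hb : ‖exp B‖ * ‖S‖ * ‖exp (-B)‖ ≤ ‖exp B‖ * ‖S‖ :=
              mul_le_of_le_one_right (mul_nonneg (norm_nonneg _) (norm_nonneg _)) n2
            linarith
    have hdiff : Differentiable ℂ (fun w : ℂ => exp (w • A) * S * exp (-(w • A))) := by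
      have h1 : Differentiable ℂ (fun w : ℂ => exp (w • A)) :=
        fun w => (hasDerivAt_exp_smul_const A w).differentiableAt
      have h2 : Differentiable ℂ (fun w : ℂ => exp (-(w • A))) := by
        have : (fun w : ℂ => exp (-(w • A))) = fun w : ℂ => exp (w • (-A)) := by
          funext w; rw [smul_neg]
        rw [this]
        exact fun w => (hasDerivAt_exp_smul_const (-A) w).differentiableAt
      exact (h1.mul (differentiable_const S)).mul h2
    have hconst : ∀ w : ℂ, exp (w • A) * S * exp (-(w • A)) = S := by
      intro w
      have h0 : exp ((0:ℂ) • A) * S * exp (-((0:ℂ) • A)) = S := by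
        simp [exp_zero]
      have := hdiff.apply_eq_apply_of_bounded ?_ w 0
      · rw [h0] at this; exact this
      · rw [Metric.isBounded_iff_subset_closedBall 0]
        refine ⟨‖S‖, ?_⟩
        rintro x ⟨w, rfl⟩
        simpa [Metric.mem_closedBall, dist_zero_right] using hbound w
    intro w
    have hinv : exp (-(w • A)) * exp (w • A) = 1 := by
      rw [← exp_add_of_commute ((Commute.refl (w • A)).neg_left), neg_add_cancel, exp_zero]
    calc exp (w • A) * S = exp (w • A) * S * (exp (-(w • A)) * exp (w • A)) := by
          rw [hinv, mul_one]
      _ = (exp (w • A) * S * exp (-(w • A))) * exp (w • A) := by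
          simp only [mul_assoc]
      _ = S * exp (w • A) := by rw [hconst w]
  have d1 : HasDerivAt (fun w : ℂ => exp (w • A) * S) (A * S) 0 := by
    have := (hasDerivAt_exp_smul_const A (0:ℂ)).mul_const S
    simpa [exp_zero] using this
  have d2 : HasDerivAt (fun w : ℂ => exp (w • A) * S) (S * A) 0 := by
    have h := (hasDerivAt_exp_smul_const A (0:ℂ)).const_mul S
    have hfun : (fun w : ℂ => S * exp (w • A)) = fun w : ℂ => exp (w • A) * S :=
      funext fun w => (key w).symm
    rw [hfun] at h
    simpa [exp_zero] using h
  exact d1.unique d2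

lemma commute_block (A B : E →L[ℂ] E) (hA : star A * A = A * star A)
    (hB : star B * B = B * star B) (hAB : A * B = B * A) :
    Commute (star A * A) (B * star B) := by
  have h1 : Commute (star A) B := fuglede A B hA hAB
  have h2 : Commute A B := hAB
  have h3 : Commute A (star B) := (fuglede B A hB hAB.symm).symm
  have h4 : Commute (star A) (star B) := h2.star_star
  exact Commute.mul_left (h1.mul_right h4) (h2.mul_right h3)

end Fuglede

section Mk2

variable {H : Type*} [NormedAddCommGroup H] [InnerProductSpace ℂ H] [CompleteSpace H]

noncomputable def mk2 (A B C D : H →L[ℂ] H) : WithLp 2 (H × H) →L[ℂ] WithLp 2 (H × H) :=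
  ((WithLp.prodContinuousLinearEquiv 2 ℂ H H).symm :
      (H × H) →L[ℂ] WithLp 2 (H × H)).comp
    ((((A.coprod B)).prod (C.coprod D)).comp
      ((WithLp.prodContinuousLinearEquiv 2 ℂ H H : WithLp 2 (H × H) →L[ℂ] (H × H))))

lemma mk2_apply' (A B C D : H →L[ℂ] H) (x : WithLp 2 (H × H)) :
    WithLp.equiv 2 (H × H) (mk2 A B C D x) =
      (A (WithLp.equiv 2 (H × H) x).1 + B (WithLp.equiv 2 (H × H) x).2,
       C (WithLp.equiv 2 (H × H) x).1 + D (WithLp.equiv 2 (H × H) x).2) := rfl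

lemma mk2_mul (A B C D A' B' C' D' : H →L[ℂ] H) :
    mk2 A B C D * mk2 A' B' C' D' =
      mk2 (A * A' + B * C') (A * B' + B * D') (C * A' + D * C') (C * B' + D * D') := by
  ext x
  have h := mk2_apply' A B C D (mk2 A' B' C' D' x)
  rw [mk2_apply' A' B' C' D' x] at h
  apply (WithLp.equiv 2 (H × H)).injective
  rw [mk2_apply']
  simp only [ContinuousLinearMap.mul_apply]
  rw [h]
  simp only [map_add, ContinuousLinearMap.add_apply, ContinuousLinearMap.mul_apply]
  exact Prod.ext (by abel) (by abel)

lemma mk2_adjoint (A B C D : H →L[ℂ] H) :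
    adjoint (mk2 A B C D) = mk2 (adjoint A) (adjoint C) (adjoint B) (adjoint D) := by
  symm
  rw [ContinuousLinearMap.eq_adjoint_iff]
  intro x y
  rw [WithLp.prod_inner_apply, WithLp.prod_inner_apply]
  show (inner ℂ (adjoint A (WithLp.equiv 2 (H × H) x).1 + adjoint C (WithLp.equiv 2 (H × H) x).2)
        (WithLp.equiv 2 (H × H) y).1 : ℂ)
      + inner ℂ (adjoint B (WithLp.equiv 2 (H × H) x).1 + adjoint D (WithLp.equiv 2 (H × H) x).2)
        (WithLp.equiv 2 (H × H) y).2
    = inner ℂ (WithLp.equiv 2 (H × H) x).1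
        (A (WithLp.equiv 2 (H × H) y).1 + B (WithLp.equiv 2 (H × H) y).2)
      + inner ℂ (WithLp.equiv 2 (H × H) x).2
        (C (WithLp.equiv 2 (H × H) y).1 + D (WithLp.equiv 2 (H × H) y).2)
  simp only [inner_add_left, inner_add_right, ContinuousLinearMap.adjoint_inner_left]
  ring

lemma mk2_inj {A B C D A' B' C' D' : H →L[ℂ] H}
    (h : mk2 A B C D = mk2 A' B' C' D') : A = A' ∧ B = B' ∧ C = C' ∧ D = D' := by
  have h1 : ∀ x : H, A x = A' x ∧ C x = C' x := by
    intro x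
    have h0 : mk2 A B C D ((WithLp.equiv 2 (H × H)).symm (x, 0)) =
        mk2 A' B' C' D' ((WithLp.equiv 2 (H × H)).symm (x, 0)) := by rw [h]
    have h2 := congrArg (WithLp.equiv 2 (H × H)) h0
    rw [mk2_apply', mk2_apply'] at h2
    simp only [Equiv.apply_symm_apply, map_zero, add_zero] at h2
    exact ⟨congrArg Prod.fst h2, congrArg Prod.snd h2⟩
  have h2 : ∀ x : H, B x = B' x ∧ D x = D' x := by
    intro x
    have h0 : mk2 A B C D ((WithLp.equiv 2 (H × H)).symm (0, x)) =
        mk2 A' B' C' D' ((WithLp.equiv 2 (H × H)).symm (0, x)) := by rw [h]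
    have h2 := congrArg (WithLp.equiv 2 (H × H)) h0
    rw [mk2_apply', mk2_apply'] at h2
    simp only [Equiv.apply_symm_apply, map_zero, zero_add] at h2
    exact ⟨congrArg Prod.fst h2, congrArg Prod.snd h2⟩
  exact ⟨ContinuousLinearMap.ext fun x => (h1 x).1, ContinuousLinearMap.ext fun x => (h2 x).1,
    ContinuousLinearMap.ext fun x => (h1 x).2, ContinuousLinearMap.ext fun x => (h2 x).2⟩

end Mk2

theorem stmt_15 {H : Type*}
    [NormedAddCommGroup H] [InnerProductSpace ℂ H] [CompleteSpace H]
    (T₁ T₂ T₃ T₄ : H →L[ℂ] H)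
    (hnormal : ∀ S ∈ ({T₁, T₂, T₃, T₄} : Set (H →L[ℂ] H)), adjoint S * S = S * adjoint S)
    (hcomm : ∀ S ∈ ({T₁, T₂, T₃, T₄} : Set (H →L[ℂ] H)),
      ∀ R ∈ ({T₁, T₂, T₃, T₄} : Set (H →L[ℂ] H)), S * R = R * S)
    (T : WithLp 2 (H × H) →L[ℂ] WithLp 2 (H × H))
    (hT : ∀ x : WithLp 2 (H × H),
      WithLp.equiv 2 (H × H) (T x) =
        (T₁ (WithLp.equiv 2 (H × H) x).1 + T₂ (WithLp.equiv 2 (H × H) x).2,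
         T₃ (WithLp.equiv 2 (H × H) x).1 + T₄ (WithLp.equiv 2 (H × H) x).2))
    (t₁ t₂ t₃ s₁ s₂ s₃ : H →L[ℂ] H)
    (ht₁ : t₁ = adjoint T₁ * T₁ + adjoint T₃ * T₃)
    (ht₂ : t₂ = adjoint T₁ * T₂ + adjoint T₃ * T₄)
    (ht₃ : t₃ = adjoint T₂ * T₂ + adjoint T₄ * T₄)
    (hs₁ : s₁ = T₁ * adjoint T₁ + T₂ * adjoint T₂)
    (hs₂ : s₂ = T₁ * adjoint T₃ + T₂ * adjoint T₄)
    (hs₃ : s₃ = T₃ * adjoint T₃ + T₄ * adjoint T₄) :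
    Binormal T ↔
      (adjoint (s₂ * adjoint t₂) = s₂ * adjoint t₂ ∧
       adjoint (adjoint s₂ * t₂) = adjoint s₂ * t₂ ∧
       t₁ * s₂ + t₂ * s₃ = s₁ * t₂ + s₂ * t₃) := by
  simp only [← star_eq_adjoint] at ht₁ ht₂ ht₃ hs₁ hs₂ hs₃ hnormal ⊢
  -- normality
  have n1 : star T₁ * T₁ = T₁ * star T₁ := hnormal T₁ (by simp)
  have n2 : star T₂ * T₂ = T₂ * star T₂ := hnormal T₂ (by simp)
  have n3 : star T₃ * T₃ = T₃ * star T₃ := hnormal T₃ (by simp)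
  have n4 : star T₄ * T₄ = T₄ * star T₄ := hnormal T₄ (by simp)
  -- commutations
  have c12 : T₁ * T₂ = T₂ * T₁ := hcomm T₁ (by simp) T₂ (by simp)
  have c31 : T₃ * T₁ = T₁ * T₃ := hcomm T₃ (by simp) T₁ (by simp)
  have c32 : T₃ * T₂ = T₂ * T₃ := hcomm T₃ (by simp) T₂ (by simp)
  have c23 : T₂ * T₃ = T₃ * T₂ := hcomm T₂ (by simp) T₃ (by simp)
  have c24 : T₂ * T₄ = T₄ * T₂ := hcomm T₂ (by simp) T₄ (by simp)
  have c43 : T₄ * T₃ = T₃ * T₄ := hcomm T₄ (by simp) T₃ (by simp)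
  -- commutation of t₁ with s₁ and t₃ with s₃
  have hts1 : Commute t₁ s₁ := by
    rw [ht₁, hs₁]
    exact Commute.add_left
      ((commute_block T₁ T₁ n1 n1 rfl).add_right (commute_block T₁ T₂ n1 n2 c12))
      ((commute_block T₃ T₁ n3 n1 c31).add_right (commute_block T₃ T₂ n3 n2 c32))
  have hts3 : Commute t₃ s₃ := by
    rw [ht₃, hs₃]
    exact Commute.add_left
      ((commute_block T₂ T₃ n2 n3 c23).add_right (commute_block T₂ T₄ n2 n4 c24))
      ((commute_block T₄ T₃ n4 n3 c43).add_right (commute_block T₄ T₄ n4 n4 rfl))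
  -- self-adjointness
  have hst1 : star t₁ = t₁ := by rw [ht₁]; simp [star_add, star_mul, star_star]
  have hst3 : star t₃ = t₃ := by rw [ht₃]; simp [star_add, star_mul, star_star]
  have hss1 : star s₁ = s₁ := by rw [hs₁]; simp [star_add, star_mul, star_star]
  have hss3 : star s₃ = s₃ := by rw [hs₃]; simp [star_add, star_mul, star_star]
  have hstt2 : star t₂ = star T₂ * T₁ + star T₄ * T₃ := by
    rw [ht₂]; simp [star_add, star_mul, star_star]
  have hsts2 : star s₂ = T₃ * star T₁ + T₄ * star T₂ := by
    rw [hs₂]; simp [star_add, star_mul, star_star]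
  -- matrix form of T
  have hTmk : T = mk2 T₁ T₂ T₃ T₄ := by
    ext x
    apply (WithLp.equiv 2 (H × H)).injective
    rw [hT x, mk2_apply']
  have hTadj : star T = mk2 (star T₁) (star T₃) (star T₂) (star T₄) := by
    rw [star_eq_adjoint, hTmk, mk2_adjoint]
    simp only [← star_eq_adjoint]
  have hTT : star T * T = mk2 t₁ t₂ (star t₂) t₃ := by
    rw [hTadj, hTmk, mk2_mul, hstt2, ht₁, ht₂, ht₃]
  have hTT' : T * star T = mk2 s₁ s₂ (star s₂) s₃ := by
    rw [hTadj, hTmk, mk2_mul, hsts2, hs₁, hs₂, hs₃]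
  have hbin : Binormal T ↔
      (t₁ * s₁ + t₂ * star s₂ = s₁ * t₁ + s₂ * star t₂ ∧
       t₁ * s₂ + t₂ * s₃ = s₁ * t₂ + s₂ * t₃ ∧
       star t₂ * s₁ + t₃ * star s₂ = star s₂ * t₁ + s₃ * star t₂ ∧
       star t₂ * s₂ + t₃ * s₃ = star s₂ * t₂ + s₃ * t₃) := by
    unfold Binormal
    simp only [← star_eq_adjoint]
    rw [hTT, hTT', mk2_mul, mk2_mul]
    constructor
    · intro h
      obtain ⟨e1, e2, e3, e4⟩ := mk2_inj h
      exact ⟨e1, e2, e3, e4⟩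
    · rintro ⟨e1, e2, e3, e4⟩
      rw [e1, e2, e3, e4]
  rw [hbin]
  constructor
  · rintro ⟨e1, e2, e3, e4⟩
    refine ⟨?_, ?_, e2⟩
    · rw [star_mul, star_star]
      rw [hts1.eq] at e1
      exact add_left_cancel e1
    · rw [star_mul, star_star]
      rw [hts3.eq] at e4
      exact add_right_cancel e4
  · rintro ⟨c1, c2, c3⟩
    rw [star_mul, star_star] at c1 c2
    refine ⟨by rw [hts1.eq, c1], c3, ?_, by rw [hts3.eq, c2]⟩
    have h := congrArg star c3
    simp only [star_add, star_mul, star_star, hst1, hst3, hss1, hss3] at h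
    exact h.symm
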